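/- arXiv:2212.06132 — 3 statements merged into one kernel-verified Lean document; each statement's English description precedes it below -/
import Mathlib

section
/- Let A, B be d×d real positive definite matrices with A ⪰ B (i.e., A − B is positive semidefinite). Then for any vector x ∈ ℝ^d, ‖x‖_A ≤ ‖x‖_B · √(det A / det B), where ‖x‖_M := √(xᵀ M x). -/
open Matrix Finset
open scoped MatrixOrder

-- eigenvalues of M are ≥ 1 when M - 1 is PSD
lemma eig_ge_one {d : ℕ} {M : Matrix (Fin d) (Fin d) ℝ} (hM : M.IsHermitian)
    (h : (M - 1).PosSemidef) (i : Fin d) : 1 ≤ hM.eigenvalues i := by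
  have hv := hM.mulVec_eigenvectorBasis i
  set v : Fin d → ℝ := ⇑(hM.eigenvectorBasis i) with hvdef
  have hnorm : v ⬝ᵥ v = 1 := by
    have h1 : ‖hM.eigenvectorBasis i‖ = 1 := hM.eigenvectorBasis.orthonormal.1 i
    have := real_inner_self_eq_norm_sq (hM.eigenvectorBasis i)
    rw [EuclideanSpace.inner_eq_star_dotProduct] at this
    simp only [h1, one_pow, star_trivial] at this
    simpa [hvdef] using this
  have h2 := h.dotProduct_mulVec_nonneg v
  have h3 : (M - 1) *ᵥ v = (hM.eigenvalues i - 1) • v := by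
    rw [sub_mulVec, hv, one_mulVec, sub_smul, one_smul]
  rw [h3] at h2
  simp only [star_trivial, dotProduct_smul, smul_eq_mul, hnorm, mul_one, RCLike.re_to_real] at h2
  linarith

lemma key {d : ℕ} {M : Matrix (Fin d) (Fin d) ℝ} (hM : M.IsHermitian)
    (h1 : ∀ i, 1 ≤ hM.eigenvalues i) (y : Fin d → ℝ) :
    y ⬝ᵥ M *ᵥ y ≤ M.det * (y ⬝ᵥ y) := by
  set U : Matrix (Fin d) (Fin d) ℝ := (hM.eigenvectorUnitary : Matrix (Fin d) (Fin d) ℝ) with hU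
  set z : Fin d → ℝ := star U *ᵥ y with hz
  have hUU : U * star U = 1 := Matrix.mem_unitaryGroup_iff.mp hM.eigenvectorUnitary.2
  have hstar : star U = Uᵀ := by
    ext i j; simp [Matrix.star_apply]
  have hvm : y ᵥ* U = z := by rw [hz, hstar, mulVec_transpose]
  have hquad : y ⬝ᵥ M *ᵥ y = ∑ i, hM.eigenvalues i * z i ^ 2 := by
    conv_lhs => rw [hM.spectral_theorem, Unitary.conjStarAlgAut_apply]
    rw [← mulVec_mulVec, ← mulVec_mulVec, dotProduct_mulVec y U, hvm, ← hz]
    simp [dotProduct, mulVec_diagonal, Finset.mul_sum]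
    exact Finset.sum_congr rfl fun i _ => by ring
  have hnormz : z ⬝ᵥ z = y ⬝ᵥ y := by
    calc z ⬝ᵥ z = (z ᵥ* star U) ⬝ᵥ y := by rw [hz, dotProduct_mulVec]
    _ = (U *ᵥ z) ⬝ᵥ y := by rw [← mulVec_transpose, hstar, transpose_transpose]
    _ = ((U * star U) *ᵥ y) ⬝ᵥ y := by rw [hz, mulVec_mulVec]
    _ = y ⬝ᵥ y := by rw [hUU, one_mulVec]
  have hdet : M.det = ∏ i, hM.eigenvalues i := by
    simpa using hM.det_eq_prod_eigenvalues
  rw [hquad, ← hnormz, hdet, dotProduct, Finset.mul_sum]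
  apply Finset.sum_le_sum
  intro i _
  have hle : hM.eigenvalues i ≤ ∏ j, hM.eigenvalues j := by
    rw [← Finset.mul_prod_erase Finset.univ hM.eigenvalues (Finset.mem_univ i)]
    nth_rewrite 1 [← mul_one (hM.eigenvalues i)]
    apply mul_le_mul_of_nonneg_left _ (le_trans zero_le_one (h1 i))
    calc (1:ℝ) = ∏ _j ∈ Finset.univ.erase i, (1:ℝ) := by simp
    _ ≤ ∏ j ∈ Finset.univ.erase i, hM.eigenvalues j :=
        Finset.prod_le_prod (fun _ _ => zero_le_one) (fun j _ => h1 j)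
  have := mul_le_mul_of_nonneg_right hle (sq_nonneg (z i))
  calc hM.eigenvalues i * z i ^ 2 ≤ (∏ j, hM.eigenvalues j) * z i ^ 2 := this
  _ = (∏ j, hM.eigenvalues j) * (z i * z i) := by ring

lemma dot_mulVec_mulVec {d : ℕ} (P Q : Matrix (Fin d) (Fin d) ℝ) (x : Fin d → ℝ) :
    (P *ᵥ x) ⬝ᵥ (Q *ᵥ x) = x ⬝ᵥ (Pᵀ * Q) *ᵥ x := by
  calc (P *ᵥ x) ⬝ᵥ (Q *ᵥ x) = (x ᵥ* Pᵀ) ⬝ᵥ (Q *ᵥ x) := by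
        rw [← mulVec_transpose, transpose_transpose]
  _ = x ⬝ᵥ Pᵀ *ᵥ (Q *ᵥ x) := (dotProduct_mulVec x Pᵀ _).symm
  _ = x ⬝ᵥ (Pᵀ * Q) *ᵥ x := by rw [mulVec_mulVec]

theorem norm_le_of_loewner {d : ℕ} (A B : Matrix (Fin d) (Fin d) ℝ)
    (hA : A.PosDef) (hB : B.PosDef) (hAB : (A - B).PosSemidef) (x : Fin d → ℝ) :
    Real.sqrt (x ⬝ᵥ A.mulVec x) ≤
      Real.sqrt (x ⬝ᵥ B.mulVec x) * Real.sqrt (A.det / B.det) := by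
  set S : Matrix (Fin d) (Fin d) ℝ := CFC.sqrt B with hSdef
  have hSps : S.PosSemidef := nonneg_iff_posSemidef.mp (CFC.sqrt_nonneg B)
  have hSS : S * S = B := CFC.sqrt_mul_sqrt_self B hB.posSemidef.nonneg
  have hdetS : S.det * S.det = B.det := by rw [← det_mul, hSS]
  have hdetB : 0 < B.det := hB.det_pos
  have hSdet : S.det ≠ 0 := by
    intro h; rw [h, mul_zero] at hdetS; exact hdetB.ne' hdetS.symm
  set T : Matrix (Fin d) (Fin d) ℝ := S⁻¹ with hTdef
  have hTS : T * S = 1 := nonsing_inv_mul S (isUnit_iff_ne_zero.mpr hSdet)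
  have hST : S * T = 1 := mul_nonsing_inv S (isUnit_iff_ne_zero.mpr hSdet)
  have hTH : Tᴴ = T := by rw [hTdef, conjTranspose_nonsing_inv, hSps.1]
  have hSt : Sᵀ = S := by
    ext i j
    have := congrFun (congrFun hSps.1 i) j
    simpa [conjTranspose_apply] using this
  set M : Matrix (Fin d) (Fin d) ℝ := T * A * T with hMdef
  have hMH : M.IsHermitian := by
    show Mᴴ = M
    rw [hMdef, conjTranspose_mul, conjTranspose_mul, hTH, hA.1.eq, mul_assoc]
  have hM1 : (M - 1).PosSemidef := by
    have : M - 1 = Tᴴ * (A - B) * T := by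
      rw [hTH, hMdef, mul_sub, sub_mul, ← hSS,
        show T * (S * S) * T = 1 by rw [← mul_assoc, hTS, one_mul, hST]]
    rw [this]
    exact hAB.conjTranspose_mul_mul_same T
  have hk := key hMH (fun i => eig_ge_one hMH hM1 i) (S *ᵥ x)
  have e1 : (S *ᵥ x) ⬝ᵥ M *ᵥ (S *ᵥ x) = x ⬝ᵥ A *ᵥ x := by
    rw [mulVec_mulVec, dot_mulVec_mulVec, hSt]
    congr 1
    rw [hMdef, mul_assoc (T * A), hTS, mul_one, ← mul_assoc, hST, one_mul]
  have e2 : (S *ᵥ x) ⬝ᵥ (S *ᵥ x) = x ⬝ᵥ B *ᵥ x := by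
    rw [dot_mulVec_mulVec, hSt, hSS]
  have hdetM : M.det = A.det / B.det := by
    rw [hMdef, det_mul, det_mul, hTdef, det_nonsing_inv]
    rw [← hdetS, Ring.inverse_eq_inv']
    field_simp
  rw [e1, e2, hdetM] at hk
  have hBnn : 0 ≤ x ⬝ᵥ B *ᵥ x := by simpa using hB.posSemidef.dotProduct_mulVec_nonneg x
  rw [← Real.sqrt_mul hBnn]
  apply Real.sqrt_le_sqrt
  rw [mul_comm] at hk
  exact hk
end

section
/- Let Σ₀ be a d×d positive definite matrix, x₁,…,x_K ∈ ℝ^d, and define Σ_k = Σ₀ + Σ_{i=1}^k x_i x_iᵀ. Then Σ_{i=1}^k min{1, x_iᵀ Σ_{i-1}^{-1} x_i} ≤ 2 log(det Σ_k / det Σ₀). -/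
open Matrix Finset

lemma vecMulVec_self_posSemidef' {d : ℕ} (v : Fin d → ℝ) :
    (vecMulVec v v).PosSemidef := by
  have h := Matrix.posSemidef_self_mul_conjTranspose (Matrix.replicateCol Unit v)
  have hc : (Matrix.replicateCol Unit v)ᴴ = Matrix.replicateRow Unit v := by
    rw [Matrix.conjTranspose_replicateCol]; simp
  rw [hc] at h
  rwa [vecMulVec_eq Unit]

lemma min_one_le_two_log {u : ℝ} (hu : 0 ≤ u) : min 1 u ≤ 2 * Real.log (1 + u) := by
  rcases le_total u 1 with h | h
  · rw [min_eq_right h]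
    have hlog := Real.one_sub_inv_le_log_of_pos (show (0:ℝ) < 1 + u by linarith)
    have hinv : (1 + u)⁻¹ = 1 / (1 + u) := by ring
    have h2 : 1 - (1 + u)⁻¹ = u / (1 + u) := by
      rw [hinv]; field_simp; ring
    have h1u : (0:ℝ) < 1 + u := by linarith
    rw [h2, div_le_iff₀ h1u] at hlog
    have hL : 0 ≤ Real.log (1 + u) := Real.log_nonneg (by linarith)
    nlinarith [mul_nonneg hL (sub_nonneg.mpr h)]
  · rw [min_eq_left h]
    have h2 : Real.log 2 ≤ Real.log (1 + u) :=
      Real.log_le_log (by norm_num) (by linarith)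
    have := Real.log_two_gt_d9
    linarith

theorem elliptical_potential {d K : ℕ} (Sig0 : Matrix (Fin d) (Fin d) ℝ)
    (hSig0 : Sig0.PosDef) (x : ℕ → Fin d → ℝ)
    (Sig : ℕ → Matrix (Fin d) (Fin d) ℝ)
    (hSig : ∀ k, Sig k = Sig0 + ∑ i ∈ Finset.range k, vecMulVec (x i) (x i))
    (k : ℕ) (hk : k ≤ K) :
    ∑ i ∈ Finset.range k, min 1 (x i ⬝ᵥ (Sig i)⁻¹.mulVec (x i)) ≤
      2 * Real.log ((Sig k).det / Sig0.det) := by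
  clear hk
  have hpos : ∀ k, (Sig k).PosDef := by
    intro k
    rw [hSig k]
    refine hSig0.add_posSemidef ?_
    induction k with
    | zero => simpa using Matrix.PosSemidef.zero
    | succ n ih =>
        rw [Finset.sum_range_succ]
        exact ih.add (vecMulVec_self_posSemidef' _)
  have hq : ∀ k, 0 ≤ x k ⬝ᵥ (Sig k)⁻¹.mulVec (x k) := by
    intro k
    have := ((hpos k).inv).posSemidef.dotProduct_mulVec_nonneg (x k)
    simpa using this
  have hdet : ∀ k, (Sig (k+1)).det
      = (Sig k).det * (1 + x k ⬝ᵥ (Sig k)⁻¹.mulVec (x k)) := by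
    intro k
    have h1 : Sig (k+1) = Sig k + Matrix.replicateCol Unit (x k) * Matrix.replicateRow Unit (x k) := by
      rw [hSig (k+1), hSig k, Finset.sum_range_succ, add_assoc, vecMulVec_eq Unit]
    have hA : IsUnit (Sig k).det := isUnit_iff_ne_zero.mpr (hpos k).det_pos.ne'
    rw [h1, Matrix.det_add_replicateCol_mul_replicateRow hA]
    congr 1
    rw [Matrix.mul_assoc, ← Matrix.replicateCol_mulVec, Matrix.det_unique]
    simp
  induction k with
  | zero =>
      have h00 : Sig 0 = Sig0 := by rw [hSig 0]; simp
      simp [h00, div_self hSig0.det_pos.ne']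
  | succ n ih =>
      have hdpos : ∀ m, 0 < (Sig m).det := fun m => (hpos m).det_pos
      have h0 : 0 < Sig0.det := hSig0.det_pos
      rw [Finset.sum_range_succ]
      have hmin := min_one_le_two_log (hq n)
      have hsplit : Real.log ((Sig (n+1)).det / Sig0.det)
          = Real.log ((Sig n).det / Sig0.det)
            + Real.log (1 + x n ⬝ᵥ (Sig n)⁻¹.mulVec (x n)) := by
        have h1q : (0:ℝ) < 1 + x n ⬝ᵥ (Sig n)⁻¹.mulVec (x n) := by
          have := hq n; linarith
        rw [hdet n, Real.log_div (mul_pos (hdpos n) h1q).ne' h0.ne',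
          Real.log_mul (hdpos n).ne' h1q.ne', Real.log_div (hdpos n).ne' h0.ne']
        ring
      rw [hsplit]
      linarith
end

section
/- Let {σ_k}_{k≥1} be nonnegative reals, α, γ > 0, λ > 0, and {a_k}_{k≥1} ⊂ ℝ^d with ‖a_k‖₂ ≤ A. Define recursively Σ̂₁ = λI, σ̄_k = max{σ_k, α, γ‖a_k‖_{Σ̂_k^{-1}}^{1/2}}, Σ̂_{k+1} = Σ̂_k + a_k a_kᵀ / σ̄_k². Then with ι = log(1 + KA²/(dλα²)), we have Σ_{k=1}^K min{1, ‖a_k‖_{Σ̂_k^{-1}}} ≤ 2dι + 2γ²dι + 2√(dι)·√(Σ_{k=1}^K (σ_k² + α²)). -/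
open Matrix Finset

lemma aux_min_le_two_log (x : ℝ) (hx : 0 ≤ x) : min 1 x ≤ 2 * Real.log (1 + x) := by
  have h1x : (0:ℝ) < 1 + x := by linarith
  have hlow : x / (1 + x) ≤ Real.log (1 + x) := by
    have := Real.log_le_sub_one_of_pos (x := (1+x)⁻¹) (by positivity)
    rw [Real.log_inv] at this
    have h2 : 1 - (1+x)⁻¹ ≤ Real.log (1+x) := by linarith
    have he : x / (1+x) = 1 - (1+x)⁻¹ := by field_simp; ring
    linarith [he ▸ h2]
  rcases le_total x 1 with h | h
  · rw [min_eq_right h]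
    have h2 : x / 2 ≤ x / (1+x) := by
      apply div_le_div_of_nonneg_left hx (by linarith) (by linarith)
    nlinarith [hlow]
  · rw [min_eq_left h]
    have h2 : Real.log 2 ≤ Real.log (1 + x) := Real.log_le_log (by norm_num) (by linarith)
    have := Real.log_two_gt_d9
    linarith

lemma aux_det_le (d : ℕ) (hd : 0 < d) (M : Matrix (Fin d) (Fin d) ℝ) (hM : M.PosSemidef) :
    M.det ≤ (M.trace / d) ^ d := by
  have hH := hM.1
  have hev : ∀ i, 0 ≤ hH.eigenvalues i := hM.eigenvalues_nonneg
  have hdet : M.det = ∏ i, hH.eigenvalues i := by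
    simpa using hH.det_eq_prod_eigenvalues
  have htr : M.trace = ∑ i, hH.eigenvalues i := by
    simpa using hH.trace_eq_sum_eigenvalues
  have hgm := Real.geom_mean_le_arith_mean_weighted Finset.univ
      (fun _ : Fin d => (d : ℝ)⁻¹) hH.eigenvalues
      (fun i _ => by positivity)
      (by simp [Finset.card_univ]; field_simp)
      (fun i _ => hev i)
  have key : ∏ i, hH.eigenvalues i ≤ (∑ i, (d:ℝ)⁻¹ * hH.eigenvalues i) ^ d := by
    have h1 : ∏ i, hH.eigenvalues i = (∏ i, hH.eigenvalues i ^ ((d:ℝ)⁻¹)) ^ d := by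
      rw [← Finset.prod_pow]
      congr 1; ext i
      rw [← Real.rpow_natCast (hH.eigenvalues i ^ ((d:ℝ)⁻¹)) d, ← Real.rpow_mul (hev i)]
      rw [inv_mul_cancel₀ (by exact_mod_cast hd.ne'), Real.rpow_one]
    rw [h1]
    exact pow_le_pow_left₀ (Finset.prod_nonneg fun i _ => Real.rpow_nonneg (hev i) _) hgm d
  calc M.det = ∏ i, hH.eigenvalues i := hdet
    _ ≤ (∑ i, (d:ℝ)⁻¹ * hH.eigenvalues i) ^ d := key
    _ = (M.trace / d) ^ d := by rw [htr, ← Finset.mul_sum]; ring_nf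

lemma aux_trace_nonneg (d : ℕ) (M : Matrix (Fin d) (Fin d) ℝ) (hM : M.PosSemidef) :
    0 ≤ M.trace := by
  apply Finset.sum_nonneg
  intro i _
  have h := hM.dotProduct_mulVec_nonneg (Pi.single i 1)
  simpa [Matrix.diag] using h

lemma aux_quad (d : ℕ) (x v : Fin d → ℝ) (c : ℝ) :
    x ⬝ᵥ (c • vecMulVec v v).mulVec x = c * (v ⬝ᵥ x) ^ 2 := by
  rw [smul_mulVec, dotProduct_smul]
  congr 1
  rw [show (vecMulVec v v).mulVec x = (v ⬝ᵥ x) • v from ?_]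
  · rw [dotProduct_smul, smul_eq_mul, dotProduct_comm]; ring
  · ext i; simp [vecMulVec, mulVec, dotProduct, Finset.mul_sum, mul_comm, mul_left_comm]

lemma aux_posdef_smul_one (lam : ℝ) (h : 0 < lam) (d : ℕ) :
    (lam • (1 : Matrix (Fin d) (Fin d) ℝ)).PosDef := by
  rw [Matrix.smul_one_eq_diagonal]
  exact Matrix.posDef_diagonal_iff.mpr (fun _ => h)

lemma aux_posdef_add {d : ℕ} (M : Matrix (Fin d) (Fin d) ℝ) (hM : M.PosDef)
    (N : Matrix (Fin d) (Fin d) ℝ)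
    (hH : N.IsHermitian) (hq : ∀ x, 0 ≤ x ⬝ᵥ N.mulVec x) : (M + N).PosDef := by
  exact hM.add_posSemidef (PosSemidef.of_dotProduct_mulVec_nonneg hH (fun x => by simpa using hq x))

lemma aux_herm (d : ℕ) (v : Fin d → ℝ) (c : ℝ) : (c • vecMulVec v v).IsHermitian := by
  unfold Matrix.IsHermitian
  ext i j
  simp [vecMulVec, mul_comm]

lemma aux_trace_vmv (d : ℕ) (v : Fin d → ℝ) (c : ℝ) :
    (c • vecMulVec v v).trace = c * (v ⬝ᵥ v) := by
  simp [Matrix.trace, vecMulVec, Matrix.diag, dotProduct, Finset.mul_sum]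

lemma aux_det_rec {d : ℕ} (M : Matrix (Fin d) (Fin d) ℝ) (hM : M.PosDef) (v : Fin d → ℝ)
    (c : ℝ) : (M + c • vecMulVec v v).det = M.det * (1 + c * (v ⬝ᵥ M⁻¹.mulVec v)) := by
  have hU : IsUnit M.det := hM.det_pos.ne'.isUnit
  have h1 : c • vecMulVec v v = Matrix.replicateCol Unit (c • v) * Matrix.replicateRow Unit v := by
    rw [Matrix.vecMulVec_eq Unit, Matrix.replicateCol_smul, smul_mul]
  rw [h1, Matrix.det_add_replicateCol_mul_replicateRow hU]
  congr 1
  rw [Matrix.mul_assoc, ← Matrix.replicateCol_mulVec, Matrix.det_unique]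
  simp only [Matrix.add_apply, Matrix.one_apply_eq, Matrix.replicateRow_mul_replicateCol_apply,
    Matrix.mulVec_smul, dotProduct_smul, smul_eq_mul]

set_option maxHeartbeats 2000000 in
theorem adaptive_elliptical_potential {d K : ℕ} (lam alpha gam A : ℝ)
    (hlam : 0 < lam) (halpha : 0 < alpha) (hgam : 0 < gam) (hd : 0 < d)
    (σ : ℕ → ℝ) (hσ : ∀ k, 0 ≤ σ k)
    (a : ℕ → Fin d → ℝ) (ha : ∀ k, Real.sqrt (∑ j, (a k j) ^ 2) ≤ A)
    (Sig : ℕ → Matrix (Fin d) (Fin d) ℝ)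
    (σb : ℕ → ℝ)
    (hSig1 : Sig 1 = lam • (1 : Matrix (Fin d) (Fin d) ℝ))
    (hσb : ∀ k, σb k = max (max (σ k) alpha)
      (gam * Real.sqrt (Real.sqrt (a k ⬝ᵥ (Sig k)⁻¹.mulVec (a k)))))
    (hrec : ∀ k, 1 ≤ k →
      Sig (k + 1) = Sig k + ((σb k) ^ 2)⁻¹ • vecMulVec (a k) (a k)) :
    ∑ k ∈ Finset.Icc 1 K, min 1 (Real.sqrt (a k ⬝ᵥ (Sig k)⁻¹.mulVec (a k))) ≤
      2 * d * Real.log (1 + K * A ^ 2 / (d * lam * alpha ^ 2)) +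
        2 * gam ^ 2 * d * Real.log (1 + K * A ^ 2 / (d * lam * alpha ^ 2)) +
        2 * Real.sqrt (d * Real.log (1 + K * A ^ 2 / (d * lam * alpha ^ 2))) *
          Real.sqrt (∑ k ∈ Finset.Icc 1 K, ((σ k) ^ 2 + alpha ^ 2)) := by
  set x₀ : ℝ := K * A ^ 2 / (d * lam * alpha ^ 2) with hx₀
  set ι : ℝ := Real.log (1 + x₀) with hι
  set u : ℕ → ℝ := fun k => a k ⬝ᵥ (Sig k)⁻¹.mulVec (a k) with hu
  set m : ℕ → ℝ := fun k => min 1 (((σb k) ^ 2)⁻¹ * u k) with hm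
  have hA0 : 0 ≤ A := le_trans (Real.sqrt_nonneg _) (ha 0)
  have hx₀0 : 0 ≤ x₀ := by positivity
  have hι0 : 0 ≤ ι := Real.log_nonneg (by linarith)
  have haa : ∀ k, a k ⬝ᵥ a k ≤ A ^ 2 := by
    intro k
    have h1 : a k ⬝ᵥ a k = ∑ j, (a k j) ^ 2 := by simp [dotProduct, pow_two]
    have h0 : (0:ℝ) ≤ ∑ j, (a k j) ^ 2 := Finset.sum_nonneg fun j _ => sq_nonneg _
    rw [h1]
    nlinarith [Real.sq_sqrt h0, Real.sqrt_nonneg (∑ j, (a k j) ^ 2), ha k]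
  have haa0 : ∀ k, 0 ≤ a k ⬝ᵥ a k := by
    intro k
    rw [show a k ⬝ᵥ a k = ∑ j, (a k j) ^ 2 by simp [dotProduct, pow_two]]
    exact Finset.sum_nonneg fun j _ => sq_nonneg _
  have hσbα : ∀ k, alpha ≤ σb k := fun k =>
    (hσb k) ▸ le_trans (le_max_right _ _) (le_max_left _ _)
  have hσb0 : ∀ k, 0 < σb k := fun k => lt_of_lt_of_le halpha (hσbα k)
  have hσb2 : ∀ k, 0 < σb k ^ 2 := fun k => pow_pos (hσb0 k) 2
  have hPD : ∀ k, 1 ≤ k → (Sig k).PosDef := by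
    intro k hk
    induction k, hk using Nat.le_induction with
    | base => rw [hSig1]; exact aux_posdef_smul_one lam hlam d
    | succ n hn ih =>
      rw [hrec n hn]
      refine aux_posdef_add _ ih _ (aux_herm _ _ _) (fun y => ?_)
      rw [aux_quad]
      exact mul_nonneg (inv_nonneg.mpr (hσb2 n).le) (sq_nonneg _)
  have hu0 : ∀ k, 1 ≤ k → 0 ≤ u k := by
    intro k hk
    have h := ((hPD k hk).inv).posSemidef.dotProduct_mulVec_nonneg (a k)
    simpa using h
  have hm0 : ∀ k, 1 ≤ k → 0 ≤ m k := by
    intro k hk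
    exact le_min zero_le_one (mul_nonneg (inv_nonneg.mpr (hσb2 k).le) (hu0 k hk))
  have hdetpos : ∀ k, 1 ≤ k → 0 < (Sig k).det := fun k hk => (hPD k hk).det_pos
  have hdetrec : ∀ k, 1 ≤ k →
      (Sig (k+1)).det = (Sig k).det * (1 + ((σb k)^2)⁻¹ * u k) := by
    intro k hk
    rw [hrec k hk, aux_det_rec _ (hPD k hk)]
  have hlogsum : ∀ N : ℕ, ∑ k ∈ Finset.Icc 1 N, Real.log (1 + ((σb k)^2)⁻¹ * u k)
      = Real.log (Sig (N+1)).det - Real.log (Sig 1).det := by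
    intro N
    induction N with
    | zero => simp
    | succ n ih =>
      have h1 : (0:ℝ) < 1 + ((σb (n+1))^2)⁻¹ * u (n+1) := by
        have := mul_nonneg (inv_nonneg.mpr (hσb2 (n+1)).le) (hu0 (n+1) (by omega))
        linarith
      rw [Finset.sum_Icc_succ_top (by omega : 1 ≤ n + 1), ih, hdetrec (n+1) (by omega),
        Real.log_mul (hdetpos (n+1) (by omega)).ne' h1.ne']
      ring
  have htr : ∀ N : ℕ, (Sig (N+1)).trace ≤ d * lam + N * (A^2 / alpha^2) := by
    intro N
    induction N with
    | zero =>
      rw [hSig1, Matrix.trace_smul, Matrix.trace_one, Fintype.card_fin]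
      push_cast
      simp only [smul_eq_mul]
      nlinarith [sq_nonneg A, sq_nonneg alpha]
    | succ n ih =>
      rw [hrec (n+1) (by omega), Matrix.trace_add, aux_trace_vmv]
      have hc : ((σb (n+1))^2)⁻¹ ≤ (alpha^2)⁻¹ := by
        apply inv_anti₀ (by positivity)
        have := hσbα (n+1)
        nlinarith
      have h2 : ((σb (n+1))^2)⁻¹ * (a (n+1) ⬝ᵥ a (n+1)) ≤ (alpha^2)⁻¹ * A^2 :=
        mul_le_mul hc (haa (n+1)) (haa0 (n+1)) (by positivity)
      have h3 : (alpha^2)⁻¹ * A^2 = A^2/alpha^2 := by ring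
      push_cast
      linarith [h2, h3 ▸ h2]
  -- the elliptical potential bound
  have hS : ∑ k ∈ Finset.Icc 1 K, m k ≤ 2 * (d * ι) := by
    have h1 : ∀ k ∈ Finset.Icc 1 K, m k ≤ 2 * Real.log (1 + ((σb k)^2)⁻¹ * u k) := by
      intro k hk
      exact aux_min_le_two_log _
        (mul_nonneg (inv_nonneg.mpr (hσb2 k).le) (hu0 k (Finset.mem_Icc.mp hk).1))
    have hdet1 : Real.log (Sig 1).det = d * Real.log lam := by
      rw [hSig1, Matrix.det_smul, Matrix.det_one, mul_one, Fintype.card_fin, Real.log_pow]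
    have htrd : (Sig (K+1)).trace / d ≤ lam * (1 + x₀) := by
      rw [div_le_iff₀ (by exact_mod_cast hd : (0:ℝ) < (d:ℝ))]
      have h2 := htr K
      have h3 : lam * (1 + x₀) * d = d * lam + K * (A^2/alpha^2) := by
        rw [hx₀]
        field_simp
      linarith
    have htrd0 : 0 ≤ (Sig (K+1)).trace / d := by
      have := aux_trace_nonneg d _ (hPD (K+1) (by omega)).posSemidef
      positivity
    have hdetle : (Sig (K+1)).det ≤ (lam * (1 + x₀)) ^ d :=
      le_trans (aux_det_le d hd _ (hPD (K+1) (by omega)).posSemidef)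
        (pow_le_pow_left₀ htrd0 htrd d)
    have hlogle : Real.log (Sig (K+1)).det ≤ d * (Real.log lam + ι) := by
      have h4 := Real.log_le_log (hdetpos (K+1) (by omega)) hdetle
      rw [Real.log_pow, Real.log_mul hlam.ne' (by linarith : (1:ℝ) + x₀ ≠ 0)] at h4
      · exact_mod_cast h4
    calc ∑ k ∈ Finset.Icc 1 K, m k
        ≤ ∑ k ∈ Finset.Icc 1 K, 2 * Real.log (1 + ((σb k)^2)⁻¹ * u k) :=
          Finset.sum_le_sum h1
      _ = 2 * (Real.log (Sig (K+1)).det - Real.log (Sig 1).det) := by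
          rw [← Finset.mul_sum, hlogsum K]
      _ ≤ 2 * (d * ι) := by rw [hdet1]; nlinarith [hlogle]
  -- pointwise bound
  have hpt : ∀ k, 1 ≤ k → min 1 (Real.sqrt (u k)) ≤
      (1 + gam^2) * m k + Real.sqrt (σ k ^ 2 + alpha ^ 2) * Real.sqrt (m k) := by
    intro k hk
    have hu' := hu0 k hk
    have hmk0 := hm0 k hk
    set w : ℝ := Real.sqrt (u k) with hw
    have hw0 : 0 ≤ w := Real.sqrt_nonneg _
    have hwu : w ^ 2 = u k := Real.sq_sqrt hu'
    have hsq0 : 0 ≤ Real.sqrt (σ k ^ 2 + alpha ^ 2) := Real.sqrt_nonneg _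
    have hsm0 : 0 ≤ Real.sqrt (m k) := Real.sqrt_nonneg _
    rcases le_or_gt (σb k ^ 2) (u k) with h1 | h1
    · have hm1 : m k = 1 := by
        have h2 := mul_le_mul_of_nonneg_left h1 (inv_nonneg.mpr (hσb2 k).le)
        rw [inv_mul_cancel₀ (hσb2 k).ne'] at h2
        exact min_eq_left h2
      have h3 : min 1 w ≤ 1 := min_le_left _ _
      rw [hm1, Real.sqrt_one]
      nlinarith [sq_nonneg gam]
    · have hmk : m k = (σb k ^ 2)⁻¹ * u k := by
        have h2 := mul_le_mul_of_nonneg_left h1.le (inv_nonneg.mpr (hσb2 k).le)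
        rw [inv_mul_cancel₀ (hσb2 k).ne'] at h2
        exact min_eq_right h2
      have hsm : Real.sqrt (m k) = w / σb k := by
        rw [hmk, Real.sqrt_mul (by positivity), Real.sqrt_inv,
          Real.sqrt_sq (hσb0 k).le, ← hw]
        ring
      rcases le_or_gt (gam * Real.sqrt w) (max (σ k) alpha) with h2 | h2
      · have hσeq : σb k = max (σ k) alpha := by
          rw [hσb k]; exact max_eq_left h2
        have hle : σb k ≤ Real.sqrt (σ k ^ 2 + alpha ^ 2) := by
          rw [hσeq]
          rcases max_cases (σ k) alpha with ⟨hc, _⟩ | ⟨hc, _⟩ <;> rw [hc]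
          · have hh := Real.sqrt_le_sqrt (show (σ k)^2 ≤ σ k ^ 2 + alpha ^ 2 by nlinarith)
            rwa [Real.sqrt_sq (hσ k)] at hh
          · have hh := Real.sqrt_le_sqrt (show alpha ^ 2 ≤ σ k ^ 2 + alpha ^ 2 by nlinarith [sq_nonneg (σ k)])
            rwa [Real.sqrt_sq halpha.le] at hh
        have h4 : min 1 w ≤ w := min_le_right _ _
        have h5 : σb k * (w / σb k) = w := by
          rw [mul_comm, div_mul_cancel₀ _ (hσb0 k).ne']
        have h6 : σb k * (w / σb k) ≤ Real.sqrt (σ k ^ 2 + alpha ^ 2) * (w / σb k) :=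
          mul_le_mul_of_nonneg_right hle (div_nonneg hw0 (hσb0 k).le)
        have h8 : (0:ℝ) ≤ (1 + gam^2) * m k := by nlinarith [sq_nonneg gam]
        rw [hsm]
        linarith
      · have hσeq : σb k = gam * Real.sqrt w := by
          rw [hσb k]; exact max_eq_right h2.le
        have hsw : 0 < Real.sqrt w := by
          have h4 := hσb0 k
          rw [hσeq] at h4
          nlinarith [Real.sqrt_nonneg w]
        have hwpos : 0 < w := by nlinarith [Real.sq_sqrt hw0]
        have hσ2 : σb k ^ 2 = gam ^ 2 * w := by
          rw [hσeq, mul_pow, Real.sq_sqrt hw0]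
        have hmk2 : gam ^ 2 * m k = w := by
          rw [hmk, hσ2, ← hwu]
          field_simp
        have h4 : min 1 w ≤ w := min_le_right _ _
        nlinarith [mul_nonneg hsq0 hsm0, hmk0]
  -- Cauchy-Schwarz
  have hcs : ∑ k ∈ Finset.Icc 1 K, Real.sqrt (σ k ^ 2 + alpha ^ 2) * Real.sqrt (m k) ≤
      Real.sqrt (∑ k ∈ Finset.Icc 1 K, (σ k ^ 2 + alpha ^ 2)) *
        Real.sqrt (∑ k ∈ Finset.Icc 1 K, m k) := by
    calc ∑ k ∈ Finset.Icc 1 K, Real.sqrt (σ k ^ 2 + alpha ^ 2) * Real.sqrt (m k)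
        ≤ Real.sqrt (∑ k ∈ Finset.Icc 1 K, (Real.sqrt (σ k ^ 2 + alpha ^ 2)) ^ 2) *
          Real.sqrt (∑ k ∈ Finset.Icc 1 K, (Real.sqrt (m k)) ^ 2) :=
          Real.sum_mul_le_sqrt_mul_sqrt _ _ _
      _ = Real.sqrt (∑ k ∈ Finset.Icc 1 K, (σ k ^ 2 + alpha ^ 2)) *
          Real.sqrt (∑ k ∈ Finset.Icc 1 K, m k) := by
          rw [Finset.sum_congr rfl fun k _ => Real.sq_sqrt (by positivity),
            Finset.sum_congr rfl fun k hk => Real.sq_sqrt (hm0 k (Finset.mem_Icc.mp hk).1)]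
  have hsqrtS : Real.sqrt (∑ k ∈ Finset.Icc 1 K, m k) ≤ 2 * Real.sqrt (↑d * ι) := by
    have h1 : Real.sqrt (∑ k ∈ Finset.Icc 1 K, m k) ≤ Real.sqrt (2 * (↑d * ι)) :=
      Real.sqrt_le_sqrt hS
    have h2 : Real.sqrt (2 * (↑d * ι)) = Real.sqrt 2 * Real.sqrt (↑d * ι) :=
      Real.sqrt_mul (by norm_num) _
    have h3 : Real.sqrt 2 ≤ 2 := by
      nlinarith [Real.sq_sqrt (by norm_num : (0:ℝ) ≤ 2), Real.sqrt_nonneg 2]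
    nlinarith [Real.sqrt_nonneg ((d:ℝ) * ι)]
  have hP0 : (0:ℝ) ≤ ∑ k ∈ Finset.Icc 1 K, (σ k ^ 2 + alpha ^ 2) :=
    Finset.sum_nonneg fun k _ => by positivity
  calc ∑ k ∈ Finset.Icc 1 K, min 1 (Real.sqrt (u k))
      ≤ ∑ k ∈ Finset.Icc 1 K, ((1 + gam ^ 2) * m k +
          Real.sqrt (σ k ^ 2 + alpha ^ 2) * Real.sqrt (m k)) :=
        Finset.sum_le_sum fun k hk => hpt k (Finset.mem_Icc.mp hk).1
    _ = (1 + gam ^ 2) * (∑ k ∈ Finset.Icc 1 K, m k) +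
        ∑ k ∈ Finset.Icc 1 K, Real.sqrt (σ k ^ 2 + alpha ^ 2) * Real.sqrt (m k) := by
        rw [Finset.sum_add_distrib, Finset.mul_sum]
    _ ≤ (1 + gam ^ 2) * (2 * (↑d * ι)) +
        Real.sqrt (∑ k ∈ Finset.Icc 1 K, (σ k ^ 2 + alpha ^ 2)) * (2 * Real.sqrt (↑d * ι)) := by
        have e1 := mul_le_mul_of_nonneg_left hS (by positivity : (0:ℝ) ≤ 1 + gam ^ 2)
        have e2 := hcs.trans (mul_le_mul_of_nonneg_left hsqrtS (Real.sqrt_nonneg _))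
        linarith
    _ = 2 * ↑d * ι + 2 * gam ^ 2 * ↑d * ι +
        2 * Real.sqrt (↑d * ι) * Real.sqrt (∑ k ∈ Finset.Icc 1 K, (σ k ^ 2 + alpha ^ 2)) := by
        ring
end
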